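/- arXiv:1711.01761 — 4 statements merged into one kernel-verified Lean document; each statement's English description precedes it below -/
import Mathlib

section
/- Let Z be a real-valued random variable with p = P(Z ≠ 0) > 0, and let Z_1, ..., Z_N be i.i.d. copies of Z. Define A = 0 if all Z_i = 0, and A = (Σ_{i∈[N]} Z_i) / |{i : Z_i ≠ 0}| otherwise. Then E[A] = ((1 - (1-p)^N)/p) · E[Z]. -/
open MeasureTheory ProbabilityTheory
open scoped Classical

lemma aux_integral_prod {Ω ι : Type*} [MeasurableSpace Ω] {μ : Measure Ω}
    [IsProbabilityMeasure μ] {f : ι → Ω → ℝ}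
    (hindep : iIndepFun f μ)
    (hmeas : ∀ i, Measurable (f i)) (hint : ∀ i, Integrable (f i) μ)
    (s : Finset ι) :
    Integrable (fun ω => ∏ i ∈ s, f i ω) μ ∧
      ∫ ω, ∏ i ∈ s, f i ω ∂μ = ∏ i ∈ s, ∫ ω, f i ω ∂μ := by
  induction s using Finset.induction_on with
  | empty => simp
  | @insert a s hi ih =>
    obtain ⟨ih1, ih2⟩ := ih
    have hind : IndepFun (∏ j ∈ s, f j) (f a) μ :=
      hindep.indepFun_finsetProd_of_notMem hmeas hi
    have hprodeq : (fun ω => ∏ i ∈ s, f i ω) = ∏ j ∈ s, f j := by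
      funext ω; simp
    have hint2 : Integrable ((∏ j ∈ s, f j) * f a) μ :=
      hind.integrable_mul (hprodeq ▸ ih1) (hint a)
    constructor
    · have : (fun ω => ∏ i ∈ insert a s, f i ω) = (∏ j ∈ s, f j) * f a := by
        funext ω; simp [Finset.prod_insert hi, mul_comm]
      rw [this]; exact hint2
    · rw [Finset.prod_insert hi]
      have h3 : (fun ω => ∏ i ∈ insert a s, f i ω) = (∏ j ∈ s, f j) * f a := by
        funext ω; simp [Finset.prod_insert hi, mul_comm]
      calc ∫ ω, ∏ i ∈ insert a s, f i ω ∂μ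
          = ∫ ω, ((∏ j ∈ s, f j) * f a) ω ∂μ := by rw [h3]
        _ = (∫ ω, (∏ j ∈ s, f j) ω ∂μ) * ∫ ω, f a ω ∂μ :=
            hind.integral_mul_eq_mul_integral (hprodeq ▸ ih1).aestronglyMeasurable (hint a).aestronglyMeasurable
        _ = (∫ ω, f a ω ∂μ) * ∏ i ∈ s, ∫ ω, f i ω ∂μ := by
            rw [← ih2, mul_comm]; congr 1; rw [hprodeq]

/-- Lemma 1 (expectation part): if `A` is the average of the nonzero entries among
`N` i.i.d. copies of `Z` (with `A = 0` if all vanish), then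
`E[A] = ((1 - (1-p)^N)/p) E[Z]` where `p = P(Z ≠ 0) > 0`. -/
theorem adabatch_expectation_of_nonzero_average
    {Ω : Type*} [MeasureSpace Ω] [IsProbabilityMeasure (ℙ : Measure Ω)]
    (N : ℕ) (hN : 0 < N)
    (Z : Ω → ℝ) (Zi : Fin N → Ω → ℝ)
    (hZmeas : Measurable Z) (hZimeas : ∀ i, Measurable (Zi i))
    (hZint : Integrable Z ℙ)
    (hindep : iIndepFun Zi ℙ)
    (hid : ∀ i, IdentDistrib (Zi i) Z ℙ ℙ)
    (p : ℝ) (hpdef : p = (ℙ {ω | Z ω ≠ 0}).toReal) (hppos : 0 < p)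
    (A : Ω → ℝ)
    (hA : ∀ ω, A ω = if ∀ i, Zi i ω = 0 then 0
      else (∑ i, Zi i ω) / ((Finset.univ.filter (fun i => Zi i ω ≠ 0)).card : ℝ)) :
    ∫ ω, A ω ∂ℙ = ((1 - (1 - p) ^ N) / p) * ∫ ω, Z ω ∂ℙ := by
  set q : ℝ := 1 - p with hq
  set m : ℝ := ∫ ω, Z ω ∂ℙ with hm
  set K : Ω → Finset (Fin N) := fun ω => Finset.univ.filter (fun i => Zi i ω ≠ 0) with hK
  -- key computation for each S and i ∈ S
  have key : ∀ (S : Finset (Fin N)) (i : Fin N), i ∈ S →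
      Integrable (fun ω => Zi i ω * (if K ω = S then (1:ℝ) else 0)) ℙ ∧
      ∫ ω, Zi i ω * (if K ω = S then (1:ℝ) else 0) ∂ℙ
        = m * p ^ (S.card - 1) * q ^ (N - S.card) := by
    intro S i hiS
    set g : Fin N → ℝ → ℝ := fun j x =>
      if j = i then x else if j ∈ S then (if x ≠ 0 then 1 else 0)
        else (if x = 0 then 1 else 0) with hg
    have h0 : MeasurableSet ({(0:ℝ)} : Set ℝ) := measurableSet_singleton 0
    have hgmeas : ∀ j, Measurable (g j) := by
      intro j
      by_cases hj : j = i
      · simpa [hg, hj] using (measurable_id' : Measurable fun x : ℝ => x)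
      · by_cases hjS : j ∈ S
        · simp only [hg, hj, hjS, if_false, if_true]
          exact Measurable.ite h0.compl measurable_const measurable_const
        · simp only [hg, hj, hjS, if_false]
          exact Measurable.ite h0 measurable_const measurable_const
    -- pointwise product identity
    have hpoint : ∀ ω, Zi i ω * (if K ω = S then (1:ℝ) else 0)
        = ∏ j, g j (Zi j ω) := by
      intro ω
      by_cases h : K ω = S
      · rw [if_pos h, mul_one]
        rw [Finset.prod_eq_single i]
        · simp [hg]
        · intro j _ hji
          simp only [hg, hji, if_false]
          by_cases hjS : j ∈ S
          · have : Zi j ω ≠ 0 := by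
              have : j ∈ K ω := h ▸ hjS
              simpa [hK] using this
            simp [hjS, this]
          · have : Zi j ω = 0 := by
              by_contra hne
              have : j ∈ K ω := by simp [hK, hne]
              exact hjS (h ▸ this)
            simp [hjS, this]
        · simp
      · rw [if_neg h, mul_zero]
        have : ∃ j, ¬ (j ∈ K ω ↔ j ∈ S) := by
          by_contra hall
          push_neg at hall
          exact h (Finset.ext hall)
        obtain ⟨j, hj⟩ := this
        have hmemK : j ∈ K ω ↔ Zi j ω ≠ 0 := by simp [hK]
        symm
        apply Finset.prod_eq_zero (Finset.mem_univ j)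
        by_cases hjS : j ∈ S
        · have hz : Zi j ω = 0 := by
            by_contra hne
            exact hj ⟨fun _ => hjS, fun _ => hmemK.mpr hne⟩
          by_cases hji : j = i
          · subst hji; simp [hg, hz]
          · simp [hg, hji, hjS, hz]
        · have hz : Zi j ω ≠ 0 := by
            intro hzz
            exact hj ⟨fun hmem => absurd (hmemK.mp hmem) (not_not.mpr hzz),
              fun hmem => absurd hmem hjS⟩
          have hji : j ≠ i := fun hji => hjS (hji ▸ hiS)
          simp [hg, hji, hjS, hz]
    -- independence of composed functions
    have hcomp : iIndepFun (fun j => g j ∘ Zi j) ℙ :=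
      hindep.comp g hgmeas
    have hintone : ∀ (s : Set Ω), MeasurableSet s →
        Integrable (Set.indicator s (fun _ => (1:ℝ))) ℙ :=
      fun s hs => (integrable_const (1:ℝ)).indicator hs
    have hintj : ∀ j, Integrable ((fun j => g j ∘ Zi j) j) ℙ := by
      intro j
      by_cases hj : j = i
      · subst hj
        simp only [hg, if_pos rfl, Function.comp]
        exact ((hid j).integrable_iff.mpr hZint)
      · by_cases hjS : j ∈ S
        · have heq2 : (g j ∘ Zi j) = Set.indicator {ω | Zi j ω ≠ 0} (fun _ => (1:ℝ)) := by
            funext ω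
            simp [hg, hj, hjS, Function.comp, Set.indicator_apply, Set.mem_setOf_eq]
          show Integrable (g j ∘ Zi j) ℙ
          rw [heq2]
          exact hintone _ (((hZimeas j) h0).compl)
        · have heq2 : (g j ∘ Zi j) = Set.indicator {ω | Zi j ω = 0} (fun _ => (1:ℝ)) := by
            funext ω
            simp [hg, hj, hjS, Function.comp, Set.indicator_apply, Set.mem_setOf_eq]
          show Integrable (g j ∘ Zi j) ℙ
          rw [heq2]
          exact hintone _ ((hZimeas j) h0)
    have hmeasj : ∀ j, Measurable ((fun j => g j ∘ Zi j) j) :=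
      fun j => (hgmeas j).comp (hZimeas j)
    obtain ⟨hI, hE⟩ := aux_integral_prod hcomp hmeasj hintj Finset.univ
    -- values of individual integrals
    have hval : ∀ j, ∫ ω, (g j ∘ Zi j) ω ∂ℙ
        = (if j = i then m else if j ∈ S then p else q) := by
      intro j
      have hident : ∫ ω, (g j ∘ Zi j) ω ∂ℙ = ∫ ω, (g j ∘ Z) ω ∂ℙ :=
        ((hid j).comp (hgmeas j)).integral_eq
      rw [hident]
      by_cases hj : j = i
      · simp only [hg, hj, if_pos rfl, Function.comp]
        exact hm.symm
      · by_cases hjS : j ∈ S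
        · simp only [hg, hj, hjS, if_false, if_true, Function.comp]
          have heq3 : (fun ω => if Z ω ≠ 0 then (1:ℝ) else 0)
              = Set.indicator {ω | Z ω ≠ 0} 1 := by
            funext ω; simp [Set.indicator_apply, Set.mem_setOf_eq]
          rw [heq3]
          exact (integral_indicator_one (s := {ω | Z ω ≠ 0})
            ((hZmeas h0).compl)).trans hpdef.symm
        · simp only [hg, hj, hjS, if_false, Function.comp]
          have heqind : (fun ω => if Z ω = 0 then (1:ℝ) else 0)
              = Set.indicator {ω | Z ω = 0} 1 := by
            funext ω; simp [Set.indicator_apply, Set.mem_setOf_eq]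
          rw [heqind]
          have hval0 : (ℙ {ω | Z ω = 0}).toReal = q := by
            have hms : MeasurableSet {ω | Z ω ≠ 0} := (hZmeas h0).compl
            have hcompl : {ω | Z ω = 0} = {ω | Z ω ≠ 0}ᶜ := by
              ext ω; simp [Set.mem_setOf_eq]
            have h1 : ℙ {ω | Z ω = 0} = 1 - ℙ {ω | Z ω ≠ 0} := by
              rw [hcompl]; exact prob_compl_eq_one_sub hms
            rw [h1, ENNReal.toReal_sub_of_le prob_le_one ENNReal.one_ne_top]
            simp [hpdef, hq]
          exact (integral_indicator_one (s := {ω | Z ω = 0}) (hZmeas h0)).trans hval0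
    -- product of values
    have hprodval : ∏ j, (if j = i then m else if j ∈ S then p else q)
        = m * p ^ (S.card - 1) * q ^ (N - S.card) := by
      rw [← Finset.mul_prod_erase _ _ (Finset.mem_univ i), if_pos rfl]
      have hcongr : ∏ j ∈ Finset.univ.erase i,
          (if j = i then m else if j ∈ S then p else q)
          = ∏ j ∈ Finset.univ.erase i, (if j ∈ S then p else q) := by
        apply Finset.prod_congr rfl
        intro j hj
        rw [if_neg (Finset.mem_erase.mp hj).1]
      rw [hcongr, Finset.prod_ite (fun _ => p) (fun _ => q),
        Finset.prod_const, Finset.prod_const]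
      have h1 : ((Finset.univ.erase i).filter (· ∈ S)) = S.erase i := by
        ext j; simp [Finset.mem_erase, and_comm]
      have h2 : ((Finset.univ.erase i).filter (· ∉ S)) = Sᶜ := by
        ext j
        simp only [Finset.mem_filter, Finset.mem_erase, Finset.mem_univ, and_true,
          Finset.mem_compl, true_and]
        constructor
        · exact fun h => h.2
        · exact fun h => ⟨fun e => h (e ▸ hiS), h⟩
      rw [h1, h2, Finset.card_erase_of_mem hiS, Finset.card_compl, Fintype.card_fin]
      ring
    -- assemble
    have hfuneq : (fun ω => Zi i ω * (if K ω = S then (1:ℝ) else 0))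
        = fun ω => ∏ j, (fun j => g j ∘ Zi j) j ω := by
      funext ω; exact hpoint ω
    constructor
    · rw [hfuneq]; exact hI
    · calc ∫ ω, Zi i ω * (if K ω = S then (1:ℝ) else 0) ∂ℙ
          = ∫ ω, ∏ j, (fun j => g j ∘ Zi j) j ω ∂ℙ := by rw [hfuneq]
        _ = ∏ j, ∫ ω, (g j ∘ Zi j) ω ∂ℙ := hE
        _ = ∏ j, (if j = i then m else if j ∈ S then p else q) :=
            Finset.prod_congr rfl (fun j _ => hval j)
        _ = m * p ^ (S.card - 1) * q ^ (N - S.card) := hprodval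
  -- per-S integral of the restricted average
  have hFkey : ∀ S : Finset (Fin N),
      Integrable (fun ω => if K ω = S then A ω else 0) ℙ ∧
      ∫ ω, (if K ω = S then A ω else 0) ∂ℙ
        = (if S = ∅ then 0 else m * p ^ (S.card - 1) * q ^ (N - S.card)) := by
    intro S
    rcases eq_or_ne S ∅ with rfl | hSne
    · have hzero : (fun ω => if K ω = ∅ then A ω else 0) = fun _ => (0:ℝ) := by
        funext ω
        by_cases h : K ω = ∅
        · rw [if_pos h, hA]
          have hall : ∀ i, Zi i ω = 0 := by
            intro i
            by_contra hi
            have : i ∈ K ω := by simp [hK, hi]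
            simp [h] at this
          rw [if_pos hall]
        · rw [if_neg h]
      rw [hzero]
      simp
    · have hS : S.Nonempty := Finset.nonempty_iff_ne_empty.2 hSne
      have hcard : (S.card : ℝ) ≠ 0 := by
        exact_mod_cast (Finset.card_pos.2 hS).ne'
      have hFeq : ∀ ω, (if K ω = S then A ω else 0)
          = (∑ i ∈ S, Zi i ω * (if K ω = S then (1:ℝ) else 0)) / S.card := by
        intro ω
        by_cases h : K ω = S
        · rw [if_pos h]
          simp only [h, if_true, mul_one]
          rw [hA ω]
          have hne : ¬ ∀ i, Zi i ω = 0 := by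
            obtain ⟨i, hi⟩ := hS
            intro hall
            have hmem : i ∈ K ω := h ▸ hi
            have : Zi i ω ≠ 0 := by simpa [hK] using hmem
            exact this (hall i)
          rw [if_neg hne]
          have hsum : ∑ i, Zi i ω = ∑ i ∈ S, Zi i ω := by
            symm
            apply Finset.sum_subset (Finset.subset_univ S)
            intro j _ hj
            by_contra hne2
            have : j ∈ K ω := by simp [hK, hne2]
            exact hj (h ▸ this)
          rw [hsum]
          have : Finset.univ.filter (fun i => Zi i ω ≠ 0) = S := h
          rw [this]
        · rw [if_neg h]
          simp only [h, if_false, mul_zero, Finset.sum_const_zero, zero_div]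
      have heq : (fun ω => if K ω = S then A ω else 0)
          = fun ω => (∑ i ∈ S, Zi i ω * (if K ω = S then (1:ℝ) else 0)) / S.card :=
        funext hFeq
      have hintS : Integrable
          (fun ω => ∑ i ∈ S, Zi i ω * (if K ω = S then (1:ℝ) else 0)) ℙ :=
        integrable_finset_sum _ (fun i hi => (key S i hi).1)
      constructor
      · rw [heq]; exact hintS.div_const _
      · rw [heq, integral_div, integral_finset_sum _ (fun i hi => (key S i hi).1),
          Finset.sum_congr rfl (fun i hi => (key S i hi).2),
          Finset.sum_const, nsmul_eq_mul, if_neg hSne]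
        field_simp
  -- decompose A as a sum over S
  have hAsum : ∀ ω, A ω = ∑ S : Finset (Fin N), (if K ω = S then A ω else 0) := by
    intro ω
    rw [Finset.sum_ite_eq]
    simp
  have hint : ∀ S : Finset (Fin N), Integrable (fun ω => if K ω = S then A ω else 0) ℙ :=
    fun S => (hFkey S).1
  have hIA : ∫ ω, A ω ∂ℙ
      = ∑ S : Finset (Fin N), (if S = ∅ then 0 else m * p ^ (S.card - 1) * q ^ (N - S.card)) := by
    calc ∫ ω, A ω ∂ℙ
        = ∫ ω, ∑ S : Finset (Fin N), (if K ω = S then A ω else 0) ∂ℙ := by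
          apply integral_congr_ae
          filter_upwards with ω using hAsum ω
      _ = ∑ S : Finset (Fin N), ∫ ω, (if K ω = S then A ω else 0) ∂ℙ :=
          integral_finset_sum _ (fun S _ => hint S)
      _ = ∑ S : Finset (Fin N), (if S = ∅ then 0 else m * p ^ (S.card - 1) * q ^ (N - S.card)) :=
          Finset.sum_congr rfl (fun S _ => (hFkey S).2)
  -- binomial-type identity
  have hbinom : ∑ S : Finset (Fin N), p ^ S.card * q ^ (N - S.card) = (p + q) ^ N := by
    have h := Finset.prod_add (fun _ : Fin N => p) (fun _ : Fin N => q) Finset.univ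
    rw [Finset.prod_const, Finset.card_univ, Fintype.card_fin] at h
    rw [h, Finset.powerset_univ]
    apply Finset.sum_congr rfl
    intro t _
    rw [Finset.prod_const, Finset.prod_const, Finset.card_sdiff_of_subset (Finset.subset_univ t),
      Finset.card_univ, Fintype.card_fin]
  have hpq : p + q = 1 := by rw [hq]; ring
  -- multiply through by p
  have hmain : p * ∫ ω, A ω ∂ℙ = (1 - q ^ N) * m := by
    rw [hIA, Finset.mul_sum]
    have hterm : ∀ S : Finset (Fin N),
        p * (if S = ∅ then (0:ℝ) else m * p ^ (S.card - 1) * q ^ (N - S.card))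
        = m * (p ^ S.card * q ^ (N - S.card))
          - (if S = ∅ then m * (p ^ S.card * q ^ (N - S.card)) else 0) := by
      intro S
      by_cases hS : S = ∅
      · subst hS; simp
      · rw [if_neg hS, if_neg hS]
        have hpos : 0 < S.card := Finset.card_pos.2 (Finset.nonempty_iff_ne_empty.2 hS)
        have : p ^ S.card = p * p ^ (S.card - 1) := by
          conv_lhs => rw [show S.card = (S.card - 1) + 1 by omega]
          rw [pow_succ]
          ring
        rw [this]
        ring
    rw [Finset.sum_congr rfl (fun S _ => hterm S), Finset.sum_sub_distrib]
    rw [← Finset.mul_sum, hbinom, hpq, one_pow]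
    have hdel : ∑ S : Finset (Fin N),
        (if S = ∅ then m * (p ^ S.card * q ^ (N - S.card)) else 0)
        = m * q ^ N := by
      rw [Finset.sum_ite_eq' Finset.univ (∅ : Finset (Fin N))
        (fun S => m * (p ^ S.card * q ^ (N - S.card)))]
      simp
    rw [hdel]
    ring
  -- conclude
  have hp := hppos.ne'
  field_simp at hmain ⊢
  rw [hq] at hmain
  linarith [hmain]
end

section
/- Let Z be a real-valued random variable with p = P(Z ≠ 0) > 0, finite second moment, and let A be the average of the nonzero entries among N i.i.d. copies of Z (with A = 0 if all are zero). Then E[A²] ≤ ((1-(1-p)^N)²/p²)·E[Z]² + ((1-(1-p)^N)/p)·E[Z²]. -/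
open MeasureTheory ProbabilityTheory
open scoped Classical


noncomputable def abR {Ω : Type*} (N : ℕ) (Zi : Fin N → Ω → ℝ) (i : Fin N) (ω : Ω) : ℝ :=
  (1 + ((Finset.univ.filter (fun j : ({i}ᶜ : Finset (Fin N)) => Zi j.1 ω ≠ 0)).card : ℝ))⁻¹

lemma abR_eq_card {Ω : Type*} {N : ℕ} (Zi : Fin N → Ω → ℝ) (i : Fin N) (ω : Ω) :
    abR N Zi i ω
      = (1 + ((({i}ᶜ : Finset (Fin N)).filter (fun j => Zi j ω ≠ 0)).card : ℝ))⁻¹ := by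
  have h : (Finset.univ.filter (fun j : ({i}ᶜ : Finset (Fin N)) => Zi j.1 ω ≠ 0)).card
      = (({i}ᶜ : Finset (Fin N)).filter (fun j => Zi j ω ≠ 0)).card := by
    rw [Finset.card_filter, Finset.card_filter, Finset.univ_eq_attach]
    exact Finset.sum_attach _ (fun j => if Zi j ω ≠ 0 then 1 else 0)
  rw [abR, h]

lemma abR_nonneg {Ω : Type*} {N : ℕ} (Zi : Fin N → Ω → ℝ) (i : Fin N) (ω : Ω) :
    0 ≤ abR N Zi i ω := by
  rw [abR]; positivity

lemma abR_le_one {Ω : Type*} {N : ℕ} (Zi : Fin N → Ω → ℝ) (i : Fin N) (ω : Ω) :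
    abR N Zi i ω ≤ 1 := by
  rw [abR]
  exact inv_le_one_of_one_le₀ (le_add_of_nonneg_right (Nat.cast_nonneg _))

lemma abR_of_ne {Ω : Type*} {N : ℕ} (Zi : Fin N → Ω → ℝ) (i : Fin N) (ω : Ω)
    (h : Zi i ω ≠ 0) :
    abR N Zi i ω = ((Finset.univ.filter (fun j => Zi j ω ≠ 0)).card : ℝ)⁻¹ := by
  rw [abR_eq_card]
  have h1 : ({i}ᶜ : Finset (Fin N)).filter (fun j => Zi j ω ≠ 0)
      = (Finset.univ.filter (fun j => Zi j ω ≠ 0)).erase i := by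
    ext j
    simp [Finset.mem_erase, and_comm]
  have hi : i ∈ Finset.univ.filter (fun j => Zi j ω ≠ 0) := by simp [h]
  have hk : 1 ≤ (Finset.univ.filter (fun j => Zi j ω ≠ 0)).card :=
    Finset.card_pos.2 ⟨i, hi⟩
  rw [h1, Finset.card_erase_of_mem hi, Nat.cast_sub hk]
  norm_num

lemma abR_sq_le {Ω : Type*} {N : ℕ} (Zi : Fin N → Ω → ℝ) (A : Ω → ℝ)
    (hA : ∀ ω, A ω = if ∀ i, Zi i ω = 0 then 0
      else (∑ i, Zi i ω) / ((Finset.univ.filter (fun i => Zi i ω ≠ 0)).card : ℝ)) (ω : Ω) :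
    (A ω) ^ 2 ≤ ∑ i, (Zi i ω) ^ 2 * abR N Zi i ω := by
  rw [hA ω]
  split_ifs with h
  · simpa using Finset.sum_nonneg fun i _ => mul_nonneg (sq_nonneg _) (abR_nonneg Zi i ω)
  · push_neg at h
    obtain ⟨i0, hi0⟩ := h
    set s := Finset.univ.filter (fun j => Zi j ω ≠ 0) with hs
    have hi0s : i0 ∈ s := by simp [hs, hi0]
    have hk : 0 < s.card := Finset.card_pos.2 ⟨i0, hi0s⟩
    have hkR : (0:ℝ) < (s.card : ℝ) := by exact_mod_cast hk
    have hsum : ∑ i, Zi i ω = ∑ i ∈ s, Zi i ω := (Finset.sum_filter_ne_zero _).symm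
    have hCS : (∑ i ∈ s, Zi i ω) ^ 2 ≤ (s.card : ℝ) * ∑ i ∈ s, (Zi i ω) ^ 2 := by
      exact_mod_cast sq_sum_le_card_mul_sum_sq (s := s) (f := fun i => Zi i ω)
    have hdiv : ((∑ i, Zi i ω) / (s.card:ℝ)) ^ 2 = (∑ i ∈ s, Zi i ω)^2 / (s.card:ℝ)^2 := by
      rw [hsum, div_pow]
    rw [hdiv]
    have step : (∑ i ∈ s, Zi i ω) ^ 2 / (s.card : ℝ) ^ 2
        ≤ (∑ i ∈ s, (Zi i ω) ^ 2) / (s.card : ℝ) := by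
      rw [div_le_div_iff₀ (by positivity) hkR]
      calc (∑ i ∈ s, Zi i ω) ^ 2 * (s.card:ℝ)
          ≤ ((s.card:ℝ) * ∑ i ∈ s, (Zi i ω)^2) * (s.card:ℝ) :=
            mul_le_mul_of_nonneg_right hCS hkR.le
        _ = (∑ i ∈ s, (Zi i ω)^2) * (s.card:ℝ)^2 := by ring
    refine step.trans ?_
    have hterm : (∑ i ∈ s, (Zi i ω)^2) / (s.card:ℝ) = ∑ i ∈ s, (Zi i ω)^2 * abR N Zi i ω := by
      rw [Finset.sum_div]
      refine Finset.sum_congr rfl fun i hi => ?_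
      rw [abR_of_ne Zi i ω (by simpa [hs] using (Finset.mem_filter.1 hi).2), div_eq_mul_inv]
    rw [hterm]
    exact Finset.sum_le_sum_of_subset_of_nonneg (Finset.subset_univ s)
      fun i _ _ => mul_nonneg (sq_nonneg _) (abR_nonneg Zi i ω)

lemma abR_ind_sum {Ω : Type*} {N : ℕ} (Zi : Fin N → Ω → ℝ) (ω : Ω) :
    ∑ i, (if Zi i ω ≠ 0 then (1:ℝ) else 0) * abR N Zi i ω
      = if ∀ i, Zi i ω = 0 then 0 else 1 := by
  split_ifs with h
  · refine Finset.sum_eq_zero fun i _ => ?_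
    simp [h i]
  · push_neg at h
    obtain ⟨i0, hi0⟩ := h
    set s := Finset.univ.filter (fun j => Zi j ω ≠ 0) with hs
    have hi0s : i0 ∈ s := by simp [hs, hi0]
    have hk : 0 < s.card := Finset.card_pos.2 ⟨i0, hi0s⟩
    have h1 : ∑ i, (if Zi i ω ≠ 0 then (1:ℝ) else 0) * abR N Zi i ω
        = ∑ i ∈ s, abR N Zi i ω := by
      rw [hs, Finset.sum_filter]
      refine Finset.sum_congr rfl fun i _ => ?_
      split_ifs with hi <;> simp
    rw [h1]
    have h2 : ∀ i ∈ s, abR N Zi i ω = (s.card : ℝ)⁻¹ := fun i hi =>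
      abR_of_ne Zi i ω (by simpa [hs] using (Finset.mem_filter.1 hi).2)
    rw [Finset.sum_congr rfl h2, Finset.sum_const, nsmul_eq_mul]
    field_simp

/-- Lemma 1 (second moment, upper bound): for `A` the average of the nonzero entries among
`N` i.i.d. copies of `Z` (0 if all vanish),
`E[A²] ≤ ((1-(1-p)^N)²/p²)E[Z]² + ((1-(1-p)^N)/p)E[Z²]`. -/
theorem adabatch_second_moment_bound_of_nonzero_average
    {Ω : Type*} [MeasureSpace Ω] [IsProbabilityMeasure (ℙ : Measure Ω)]
    (N : ℕ) (hN : 0 < N)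
    (Z : Ω → ℝ) (Zi : Fin N → Ω → ℝ)
    (hZmeas : Measurable Z) (hZimeas : ∀ i, Measurable (Zi i))
    (hZint : Integrable Z ℙ) (hZsq : Integrable (fun ω => (Z ω) ^ 2) ℙ)
    (hindep : iIndepFun Zi ℙ)
    (hid : ∀ i, IdentDistrib (Zi i) Z ℙ ℙ)
    (p : ℝ) (hpdef : p = (ℙ {ω | Z ω ≠ 0}).toReal) (hppos : 0 < p)
    (A : Ω → ℝ)
    (hA : ∀ ω, A ω = if ∀ i, Zi i ω = 0 then 0
      else (∑ i, Zi i ω) / ((Finset.univ.filter (fun i => Zi i ω ≠ 0)).card : ℝ)) :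
    ∫ ω, (A ω) ^ 2 ∂ℙ
      ≤ ((1 - (1 - p) ^ N) ^ 2 / p ^ 2) * (∫ ω, Z ω ∂ℙ) ^ 2
        + ((1 - (1 - p) ^ N) / p) * ∫ ω, (Z ω) ^ 2 ∂ℙ := by
  -- measurability of abR
  have hrmeas : ∀ i, Measurable (abR N Zi i) := by
    intro i
    have he : abR N Zi i = fun ω =>
        (1 + ∑ j : ({i}ᶜ : Finset (Fin N)), if Zi j.1 ω ≠ 0 then (1:ℝ) else 0)⁻¹ := by
      funext ω
      rw [abR, Finset.card_filter]
      push_cast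
      rfl
    rw [he]
    refine Measurable.inv (Measurable.add measurable_const
      (Finset.measurable_sum _ fun j _ => Measurable.ite ?_ measurable_const measurable_const))
    exact ((hZimeas j.1) (measurableSet_singleton 0)).compl
  -- independence
  have hIndep : ∀ (i : Fin N) (φ : ℝ → ℝ), Measurable φ →
      IndepFun (fun ω => φ (Zi i ω)) (abR N Zi i) ℙ := by
    intro i φ hφ
    have hbase := hindep.indepFun_finset {i} ({i}ᶜ) disjoint_compl_right hZimeas
    have hφS : Measurable (fun v : (({i} : Finset (Fin N)) → ℝ) =>
        φ (v ⟨i, Finset.mem_singleton_self i⟩)) := hφ.comp (measurable_pi_apply _)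
    have hψ : Measurable (fun v : (({i}ᶜ : Finset (Fin N)) → ℝ) =>
        (1 + ((Finset.univ.filter (fun j => v j ≠ 0)).card : ℝ))⁻¹) := by
      have he : (fun v : (({i}ᶜ : Finset (Fin N)) → ℝ) =>
          (1 + ((Finset.univ.filter (fun j => v j ≠ 0)).card : ℝ))⁻¹)
          = fun v => (1 + ∑ j, if v j ≠ 0 then (1:ℝ) else 0)⁻¹ := by
        funext v; rw [Finset.card_filter]; push_cast; rfl
      rw [he]
      refine Measurable.inv (Measurable.add measurable_const
        (Finset.measurable_sum _ fun j _ => Measurable.ite ?_ measurable_const measurable_const))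
      exact ((measurable_pi_apply j) (measurableSet_singleton 0)).compl
    exact hbase.comp hφS hψ
  -- identical distribution facts
  have hZ2id : ∀ i, IdentDistrib (fun ω => (Zi i ω)^2) (fun ω => (Z ω)^2) ℙ ℙ :=
    fun i => (hid i).comp (measurable_id.pow_const 2)
  have hZ2int : ∀ i, Integrable (fun ω => (Zi i ω)^2) ℙ :=
    fun i => (hZ2id i).integrable_iff.2 hZsq
  have hZ2eq : ∀ i, ∫ ω, (Zi i ω)^2 ∂ℙ = ∫ ω, (Z ω)^2 ∂ℙ := fun i => (hZ2id i).integral_eq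
  have hmeasNe : ∀ i, MeasurableSet {ω | Zi i ω ≠ 0} :=
    fun i => ((hZimeas i) (measurableSet_singleton 0)).compl
  have hp_i : ∀ i, (ℙ {ω | Zi i ω ≠ 0}).toReal = p := by
    intro i
    rw [hpdef]
    congr 1
    exact (hid i).measure_mem_eq (measurableSet_singleton (0:ℝ)).compl
  have hIndInt : ∀ i, ∫ ω, (if Zi i ω ≠ 0 then (1:ℝ) else 0) ∂ℙ = p := by
    intro i
    have he : (fun ω => if Zi i ω ≠ 0 then (1:ℝ) else 0)
        = Set.indicator {ω | Zi i ω ≠ 0} (fun _ => 1) := by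
      funext ω; simp [Set.indicator_apply, Set.mem_setOf_eq]
    rw [he, integral_indicator_const (1:ℝ) (hmeasNe i), smul_eq_mul, mul_one, measureReal_def, hp_i i]
  -- product formulas
  have hFeq : ∀ i, ∫ ω, (Zi i ω)^2 * abR N Zi i ω ∂ℙ
      = (∫ ω, (Z ω)^2 ∂ℙ) * ∫ ω, abR N Zi i ω ∂ℙ := by
    intro i
    have h := (hIndep i (fun x => x^2) (measurable_id.pow_const 2)).integral_mul_eq_mul_integral
      ((hZimeas i).pow_const 2).aestronglyMeasurable (hrmeas i).aestronglyMeasurable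
    rw [← hZ2eq i]
    exact h
  have hφm : Measurable (fun x : ℝ => if x ≠ 0 then (1:ℝ) else 0) :=
    Measurable.ite (measurableSet_singleton (0:ℝ)).compl measurable_const measurable_const
  have hGeq : ∀ i, ∫ ω, (if Zi i ω ≠ 0 then (1:ℝ) else 0) * abR N Zi i ω ∂ℙ
      = p * ∫ ω, abR N Zi i ω ∂ℙ := by
    intro i
    have h := (hIndep i _ hφm).integral_mul_eq_mul_integral
      (hφm.comp (hZimeas i)).aestronglyMeasurable (hrmeas i).aestronglyMeasurable
    rw [← hIndInt i]
    exact h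
  -- integrability
  have hFint : ∀ i, Integrable (fun ω => (Zi i ω)^2 * abR N Zi i ω) ℙ := by
    intro i
    refine (hZ2int i).mono' (((hZimeas i).pow_const 2).mul (hrmeas i)).aestronglyMeasurable ?_
    filter_upwards with ω
    rw [Real.norm_eq_abs, abs_mul, abs_of_nonneg (sq_nonneg (Zi i ω)),
      abs_of_nonneg (abR_nonneg Zi i ω)]
    nlinarith [abR_le_one Zi i ω, sq_nonneg (Zi i ω), abR_nonneg Zi i ω]
  have hGint : ∀ i, Integrable (fun ω => (if Zi i ω ≠ 0 then (1:ℝ) else 0) * abR N Zi i ω) ℙ := by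
    intro i
    have hm : Measurable fun ω => (if Zi i ω ≠ 0 then (1:ℝ) else 0) :=
      Measurable.ite (hmeasNe i) measurable_const measurable_const
    refine (integrable_const (1:ℝ)).mono' (hm.mul (hrmeas i)).aestronglyMeasurable ?_
    filter_upwards with ω
    rw [Real.norm_eq_abs, abs_mul]
    have h1 : |if Zi i ω ≠ 0 then (1:ℝ) else 0| ≤ 1 := by split_ifs <;> norm_num
    have h2 : |abR N Zi i ω| ≤ 1 :=
      abs_le.2 ⟨by linarith [abR_nonneg Zi i ω], abR_le_one Zi i ω⟩
    nlinarith [abs_nonneg (if Zi i ω ≠ 0 then (1:ℝ) else 0), abs_nonneg (abR N Zi i ω)]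
  -- the product probability
  have hE : MeasurableSet (⋂ i, Zi i ⁻¹' {0}) :=
    MeasurableSet.iInter fun i => (hZimeas i) (measurableSet_singleton 0)
  have hprob : ℙ (⋂ i, Zi i ⁻¹' {0}) = (ℙ (Z ⁻¹' {0}))^N := by
    rw [hindep.meas_iInter (fun i => ⟨{0}, measurableSet_singleton 0, rfl⟩)]
    have hh : ∀ i, ℙ (Zi i ⁻¹' {0}) = ℙ (Z ⁻¹' {0}) :=
      fun i => (hid i).measure_mem_eq (measurableSet_singleton (0:ℝ))
    simp [hh, Finset.prod_const]
  have hq0 : (ℙ (Z ⁻¹' {0})).toReal = 1 - p := by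
    have hc := prob_compl_eq_one_sub (μ := ℙ) ((hZmeas (measurableSet_singleton (0:ℝ))).compl)
    rw [compl_compl] at hc
    rw [hc, ENNReal.toReal_sub_of_le prob_le_one ENNReal.one_ne_top, ENNReal.toReal_one, hpdef]
    rfl
  have hIndicInt : ∫ ω, (if ∀ i, Zi i ω = 0 then (0:ℝ) else 1) ∂ℙ = 1 - (1-p)^N := by
    have hEq : (fun ω => if ∀ i, Zi i ω = 0 then (0:ℝ) else 1)
        = Set.indicator (⋂ i, Zi i ⁻¹' {0})ᶜ (fun _ => 1) := by
      funext ω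
      by_cases h : ∀ i, Zi i ω = 0
      · rw [if_pos h, Set.indicator_of_notMem]
        simp [Set.mem_iInter, h]
      · rw [if_neg h, Set.indicator_of_mem]
        simp only [Set.mem_compl_iff, Set.mem_iInter, Set.mem_preimage, Set.mem_singleton_iff]
        exact fun hall => h hall
    rw [hEq, integral_indicator_const (1:ℝ) hE.compl, smul_eq_mul, mul_one, measureReal_def,
      prob_compl_eq_one_sub hE, hprob,
      ENNReal.toReal_sub_of_le (pow_le_one' prob_le_one N) ENNReal.one_ne_top,
      ENNReal.toReal_one, ENNReal.toReal_pow, hq0]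
  -- main chain
  have step1 : ∫ ω, (A ω)^2 ∂ℙ ≤ ∫ ω, ∑ i, (Zi i ω)^2 * abR N Zi i ω ∂ℙ :=
    integral_mono_of_nonneg (Filter.Eventually.of_forall fun ω => sq_nonneg _)
      (integrable_finset_sum _ fun i _ => hFint i)
      (Filter.Eventually.of_forall fun ω => abR_sq_le Zi A hA ω)
  have step2 : ∫ ω, ∑ i, (Zi i ω)^2 * abR N Zi i ω ∂ℙ
      = (∫ ω, (Z ω)^2 ∂ℙ) * ∑ i, ∫ ω, abR N Zi i ω ∂ℙ := by
    rw [integral_finset_sum _ fun i _ => hFint i, Finset.mul_sum]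
    exact Finset.sum_congr rfl fun i _ => hFeq i
  have key : p * ∑ i, ∫ ω, abR N Zi i ω ∂ℙ = 1 - (1-p)^N := by
    rw [Finset.mul_sum]
    have h1 : ∑ i, p * ∫ ω, abR N Zi i ω ∂ℙ
        = ∑ i, ∫ ω, (if Zi i ω ≠ 0 then (1:ℝ) else 0) * abR N Zi i ω ∂ℙ :=
      Finset.sum_congr rfl fun i _ => (hGeq i).symm
    rw [h1, ← integral_finset_sum _ fun i _ => hGint i]
    simp_rw [abR_ind_sum Zi]
    exact hIndicInt
  have hsum_r : ∑ i, ∫ ω, abR N Zi i ω ∂ℙ = (1 - (1-p)^N)/p := by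
    rw [eq_div_iff hppos.ne', mul_comm]
    exact key
  have hZ2nonneg : 0 ≤ ∫ ω, (Z ω)^2 ∂ℙ := integral_nonneg fun ω => sq_nonneg _
  have main : ∫ ω, (A ω)^2 ∂ℙ ≤ ((1 - (1-p)^N)/p) * ∫ ω, (Z ω)^2 ∂ℙ := by
    rw [mul_comm]
    rw [step2, hsum_r] at step1
    exact step1
  have h0 : 0 ≤ ((1 - (1-p)^N)^2/p^2) * (∫ ω, Z ω ∂ℙ)^2 := by positivity
  linarith
end

section
/- Let M ~ Binomial(N, p) with Np ≥ 5. Then E[1/M | M > 0] ≤ 5/(Np). -/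
open Finset

private lemma binom_id (N : ℕ) (p : ℝ) (hp : 0 < p) :
    ∑ k ∈ range (N+1), (N.choose k : ℝ) * p ^ k * (1-p) ^ (N-k) / (k+1)
      = (1 - (1-p)^(N+1)) / (((N:ℝ)+1) * p) := by
  rw [eq_div_iff (by positivity), Finset.sum_mul]
  have h1 : ∀ k ∈ range (N+1),
      (N.choose k : ℝ) * p ^ k * (1-p) ^ (N-k) / (k+1) * (((N:ℝ)+1) * p)
        = p ^ (k+1) * (1-p) ^ (N-k) * ((N+1).choose (k+1) : ℝ) := by
    intro k _
    have h := Nat.add_one_mul_choose_eq N k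
    have h' : ((N:ℝ)+1) * (N.choose k : ℝ) = ((N+1).choose (k+1) : ℝ) * ((k:ℝ)+1) := by
      exact_mod_cast h
    have hk : ((k:ℝ)+1) ≠ 0 := by positivity
    rw [div_mul_eq_mul_div, div_eq_iff hk]
    linear_combination (p^(k+1) * (1-p)^(N-k)) * h'
  rw [Finset.sum_congr rfl h1]
  have hbin : ∑ j ∈ range (N+2), p ^ j * (1-p) ^ (N+1-j) * ((N+1).choose j : ℝ) = 1 := by
    simpa using (add_pow p (1-p) (N+1)).symm
  have hshift : ∑ j ∈ range (N+2), p ^ j * (1-p) ^ (N+1-j) * ((N+1).choose j : ℝ)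
      = (∑ k ∈ range (N+1), p ^ (k+1) * (1-p) ^ (N+1-(k+1)) * ((N+1).choose (k+1) : ℝ))
        + (1-p)^(N+1) := by
    rw [Finset.sum_range_succ' (fun j => p ^ j * (1-p) ^ (N+1-j) * ((N+1).choose j : ℝ))]
    simp
  have hNk : ∀ k, N+1-(k+1) = N-k := fun k => Nat.succ_sub_succ N k
  simp only [hNk] at hshift
  rw [hshift] at hbin
  linarith

/-- If `M ~ Binomial(N, p)` with `Np ≥ 5`, then `E[1/M | M > 0] ≤ 5/(Np)`.
The conditional expectation is written explicitly via the binomial distribution: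
`E[1/M | M>0] = (Σ_{k=1}^N C(N,k) p^k (1-p)^{N-k} / k) / P(M > 0)` with
`P(M > 0) = 1 - (1-p)^N`. -/
theorem binomial_cond_inverse_moment_le
    (N : ℕ) (p : ℝ) (hp : 0 < p) (hp1 : p ≤ 1) (hNp : 5 ≤ (N : ℝ) * p) :
    (∑ k ∈ Finset.Icc 1 N, (N.choose k : ℝ) * p ^ k * (1 - p) ^ (N - k) * (1 / (k : ℝ)))
        / (1 - (1 - p) ^ N)
      ≤ 5 / ((N : ℝ) * p) := by
  set q : ℝ := 1 - p with hq
  have hq0 : 0 ≤ q := by linarith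
  have hq1 : q < 1 := by simp [hq]; linarith
  have hN : 5 ≤ (N:ℝ) := le_trans hNp (by nlinarith)
  have hNpos : 0 < (N:ℝ) := by linarith
  have hNne : N ≠ 0 := by
    intro h; rw [h] at hN; norm_num at hN
  have hden : 0 < 1 - q ^ N := by
    have := pow_lt_one₀ hq0 hq1 hNne
    linarith
  rw [div_le_iff₀ hden]
  -- rewrite the Icc sum via the range sum
  have hsplit : ∑ k ∈ range (N+1), (N.choose k : ℝ) * p ^ k * q ^ (N-k) / (k+1)
      = (∑ k ∈ Finset.Icc 1 N, (N.choose k : ℝ) * p ^ k * q ^ (N-k) / (k+1)) + q ^ N := by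
    rw [Finset.sum_range_succ' (fun k => (N.choose k : ℝ) * p ^ k * q ^ (N-k) / (k+1))]
    have : Finset.Icc 1 N = Finset.Ico 1 (N+1) := by rw [Finset.Ico_add_one_right_eq_Icc]
    rw [this, Finset.sum_Ico_eq_sum_range]
    simp [add_comm]
  have hid := binom_id N p hp
  rw [← hq] at hid  -- hopefully q appears
  have hIcc : ∑ k ∈ Finset.Icc 1 N, (N.choose k : ℝ) * p ^ k * q ^ (N-k) / (k+1)
      = (1 - q^(N+1)) / (((N:ℝ)+1) * p) - q ^ N := by
    have := hsplit
    rw [hid] at this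
    linarith
  -- termwise bound: 1/k ≤ 2/(k+1) for k ≥ 1
  have hterm : (∑ k ∈ Finset.Icc 1 N, (N.choose k : ℝ) * p ^ k * q ^ (N-k) * (1 / (k : ℝ)))
      ≤ 2 * ∑ k ∈ Finset.Icc 1 N, (N.choose k : ℝ) * p ^ k * q ^ (N-k) / (k+1) := by
    rw [Finset.mul_sum]
    apply Finset.sum_le_sum
    intro k hk
    have hk1 : 1 ≤ k := (Finset.mem_Icc.mp hk).1
    have hk1' : (1:ℝ) ≤ (k:ℝ) := by exact_mod_cast hk1
    have hb : 0 ≤ (N.choose k : ℝ) * p ^ k * q ^ (N-k) := by positivity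
    have hkpos : (0:ℝ) < k := by linarith
    have h2 : 1 / (k:ℝ) ≤ 2 / ((k:ℝ)+1) := by
      rw [div_le_div_iff₀ hkpos (by linarith)]
      linarith
    calc (N.choose k : ℝ) * p ^ k * q ^ (N-k) * (1 / (k : ℝ))
        ≤ (N.choose k : ℝ) * p ^ k * q ^ (N-k) * (2 / ((k:ℝ)+1)) := by
          exact mul_le_mul_of_nonneg_left h2 hb
      _ = 2 * ((N.choose k : ℝ) * p ^ k * q ^ (N-k) / ((k:ℝ)+1)) := by ring
  calc (∑ k ∈ Finset.Icc 1 N, (N.choose k : ℝ) * p ^ k * q ^ (N-k) * (1 / (k : ℝ)))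
      ≤ 2 * ((1 - q^(N+1)) / (((N:ℝ)+1) * p) - q ^ N) := by rw [← hIcc]; exact hterm
    _ ≤ 5 / ((N:ℝ)*p) * (1 - q ^ N) := by
        have hq1' : 1 - q^(N+1) = (1 - q^N) + p * q^N := by
          have : q^(N+1) = q^N * q := pow_succ q N
          rw [this, hq]; ring
        have hA : 2 * ((1 - q^(N+1)) / (((N:ℝ)+1) * p) - q ^ N)
            = 2 * (1 - q^N - (N:ℝ) * p * q^N) / (((N:ℝ)+1) * p) := by
          rw [hq1']
          field_simp
          ring
        rw [hA]
        have hqN : 0 ≤ q ^ N := by positivity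
        have h1 : 2 * (1 - q^N - (N:ℝ) * p * q^N) ≤ 5 * (1 - q^N) := by
          nlinarith
        have h2 : (N:ℝ) * p ≤ ((N:ℝ)+1) * p := by nlinarith
        have h3 : 0 < (N:ℝ) * p := by positivity
        calc 2 * (1 - q^N - (N:ℝ) * p * q^N) / (((N:ℝ)+1) * p)
            ≤ 5 * (1 - q^N) / ((N:ℝ)*p) :=
              div_le_div₀ (by positivity) h1 h3 h2
          _ = 5 / ((N:ℝ)*p) * (1 - q ^ N) := by ring
end

section
/- Let X be a random vector in {0,1}^d with uncorrelated coordinates and coordinate means p^(k), and let φ be a random convex function with m ≤ φ'' ≤ M on a convex compact set D, independent structure as in the model f(w) = φ(Xᵀw). Then for all w ∈ D, the Hessian F''(w) of F(w) = E[φ(Xᵀw)] satisfies m(1 - p_max) Diag(p) ⪯ F''(w) ⪯ M(1 + Σ_k p^(k)) Diag(p). -/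
open MeasureTheory ProbabilityTheory

open Matrix in

lemma sparse_aux {Ω : Type*} [MeasureSpace Ω] [IsProbabilityMeasure (ℙ : Measure Ω)]
    {d : ℕ} (X : Ω → Fin d → ℝ) (hXmeas : Measurable X)
    (hX01 : ∀ ω k, X ω k = 0 ∨ X ω k = 1)
    (g : Ω → ℝ) (m M : ℝ) (hm : 0 < m) (hM : 0 < M)
    (hg : ∀ ω, m ≤ g ω ∧ g ω ≤ M)
    (p : Fin d → ℝ) (hp : ∀ k, p k = ∫ ω, X ω k ∂ℙ)
    (pmax : ℝ) (hpmax : IsGreatest (Set.range p) pmax)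
    (huncor : ∀ k k', k ≠ k' →
      ∫ ω, X ω k * X ω k' ∂ℙ = (∫ ω, X ω k ∂ℙ) * ∫ ω, X ω k' ∂ℙ)
    (hgint : ∀ k k', Integrable (fun ω => g ω * X ω k * X ω k') ℙ)
    (A : Matrix (Fin d) (Fin d) ℝ)
    (hA : ∀ k k', A k k' = ∫ ω, g ω * X ω k * X ω k' ∂ℙ) :
    (A - (m * (1 - pmax)) • Matrix.diagonal p).PosSemidef ∧
    ((M * (1 + ∑ k, p k)) • Matrix.diagonal p - A).PosSemidef := by
  -- basic measurability / boundedness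
  have hXm : ∀ k, Measurable fun ω => X ω k := fun k => (measurable_pi_apply k).comp hXmeas
  have hX0 : ∀ ω k, 0 ≤ X ω k := by
    intro ω k; rcases hX01 ω k with h | h <;> simp [h]
  have hX1 : ∀ ω k, X ω k ≤ 1 := by
    intro ω k; rcases hX01 ω k with h | h <;> simp [h]
  have hXXint : ∀ k k', Integrable (fun ω => X ω k * X ω k') ℙ := by
    intro k k'
    refine Integrable.mono' (integrable_const 1) ((hXm k).mul (hXm k')).aestronglyMeasurable
      (Filter.Eventually.of_forall fun ω => ?_)
    rw [Real.norm_eq_abs, abs_mul, abs_of_nonneg (hX0 ω k), abs_of_nonneg (hX0 ω k')]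
    exact mul_le_one₀ (hX1 ω k) (hX0 ω k') (hX1 ω k')
  have hXint : ∀ k, Integrable (fun ω => X ω k) ℙ := by
    intro k
    refine Integrable.mono' (integrable_const 1) (hXm k).aestronglyMeasurable
      (Filter.Eventually.of_forall fun ω => ?_)
    rw [Real.norm_eq_abs, abs_of_nonneg (hX0 ω k)]; exact hX1 ω k
  have hpnn : ∀ k, 0 ≤ p k := by
    intro k; rw [hp k]; exact integral_nonneg fun ω => hX0 ω k
  have hp1 : ∀ k, p k ≤ 1 := by
    intro k; rw [hp k]
    calc ∫ ω, X ω k ∂ℙ ≤ ∫ _, (1:ℝ) ∂ℙ := integral_mono (hXint k) (integrable_const 1) (fun ω => hX1 ω k)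
    _ = 1 := by simp
  have hple : ∀ k, p k ≤ pmax := fun k => hpmax.2 ⟨k, rfl⟩
  have hpmax1 : pmax ≤ 1 := by obtain ⟨k0, hk0⟩ := hpmax.1; rw [← hk0]; exact hp1 k0
  -- second moments
  have hEXX : ∀ k k', ∫ ω, X ω k * X ω k' ∂ℙ = if k = k' then p k else p k * p k' := by
    intro k k'
    by_cases h : k = k'
    · subst h; simp only [if_pos rfl, hp]
      congr 1; funext ω; rcases hX01 ω k with h | h <;> simp [h]
    · rw [if_neg h, huncor k k' h, hp, hp]
  -- quadratic form of A
  have expand : ∀ (v : Fin d → ℝ) (ω : Ω),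
      g ω * (∑ k, v k * X ω k) ^ 2 = ∑ k, ∑ k', (v k * v k') * (g ω * X ω k * X ω k') := by
    intro v ω
    rw [sq, Finset.sum_mul_sum, Finset.mul_sum]
    refine Finset.sum_congr rfl fun k _ => ?_
    rw [Finset.mul_sum]
    exact Finset.sum_congr rfl fun k' _ => by ring
  have expand2 : ∀ (v : Fin d → ℝ) (ω : Ω),
      (∑ k, v k * X ω k) ^ 2 = ∑ k, ∑ k', (v k * v k') * (X ω k * X ω k') := by
    intro v ω
    rw [sq, Finset.sum_mul_sum]
    refine Finset.sum_congr rfl fun k _ => Finset.sum_congr rfl fun k' _ => by ring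
  have hgY2int : ∀ v : Fin d → ℝ, Integrable (fun ω => g ω * (∑ k, v k * X ω k) ^ 2) ℙ := by
    intro v
    have : (fun ω => g ω * (∑ k, v k * X ω k) ^ 2)
        = fun ω => ∑ k, ∑ k', (v k * v k') * (g ω * X ω k * X ω k') := funext fun ω => expand v ω
    rw [this]
    exact integrable_finset_sum _ fun k _ => integrable_finset_sum _ fun k' _ =>
      (hgint k k').const_mul _
  have hY2int : ∀ v : Fin d → ℝ, Integrable (fun ω => (∑ k, v k * X ω k) ^ 2) ℙ := by
    intro v
    have : (fun ω => (∑ k, v k * X ω k) ^ 2)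
        = fun ω => ∑ k, ∑ k', (v k * v k') * (X ω k * X ω k') := funext fun ω => expand2 v ω
    rw [this]
    exact integrable_finset_sum _ fun k _ => integrable_finset_sum _ fun k' _ =>
      (hXXint k k').const_mul _
  have hquad : ∀ v : Fin d → ℝ,
      v ⬝ᵥ A *ᵥ v = ∫ ω, g ω * (∑ k, v k * X ω k) ^ 2 ∂ℙ := by
    intro v
    have h1 : ∫ ω, g ω * (∑ k, v k * X ω k) ^ 2 ∂ℙ
        = ∑ k, ∑ k', (v k * v k') * ∫ ω, g ω * X ω k * X ω k' ∂ℙ := by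
      rw [show (fun ω => g ω * (∑ k, v k * X ω k) ^ 2)
          = fun ω => ∑ k, ∑ k', (v k * v k') * (g ω * X ω k * X ω k') from
          funext fun ω => expand v ω]
      rw [integral_finset_sum _ fun k _ => integrable_finset_sum _ fun k' _ =>
        (hgint k k').const_mul _]
      refine Finset.sum_congr rfl fun k _ => ?_
      rw [integral_finset_sum _ fun k' _ => (hgint k k').const_mul _]
      exact Finset.sum_congr rfl fun k' _ => integral_const_mul _ _
    rw [h1]
    simp only [dotProduct, Matrix.mulVec, dotProduct, hA]
    refine Finset.sum_congr rfl fun k _ => ?_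
    rw [Finset.mul_sum]
    exact Finset.sum_congr rfl fun k' _ => by ring
  have hY2 : ∀ v : Fin d → ℝ,
      ∫ ω, (∑ k, v k * X ω k) ^ 2 ∂ℙ
        = (∑ k, v k * p k) ^ 2 + ∑ k, v k ^ 2 * (p k * (1 - p k)) := by
    intro v
    have h1 : ∫ ω, (∑ k, v k * X ω k) ^ 2 ∂ℙ
        = ∑ k, ∑ k', (v k * v k') * ∫ ω, X ω k * X ω k' ∂ℙ := by
      rw [show (fun ω => (∑ k, v k * X ω k) ^ 2)
          = fun ω => ∑ k, ∑ k', (v k * v k') * (X ω k * X ω k') from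
          funext fun ω => expand2 v ω]
      rw [integral_finset_sum _ fun k _ => integrable_finset_sum _ fun k' _ =>
        (hXXint k k').const_mul _]
      refine Finset.sum_congr rfl fun k _ => ?_
      rw [integral_finset_sum _ fun k' _ => (hXXint k k').const_mul _]
      exact Finset.sum_congr rfl fun k' _ => integral_const_mul _ _
    rw [h1]
    have h2 : ∀ k k' : Fin d, (v k * v k') * ∫ ω, X ω k * X ω k' ∂ℙ
        = (v k * p k) * (v k' * p k') + (if k' = k then v k ^ 2 * (p k * (1 - p k)) else 0) := by
      intro k k'
      by_cases h : k = k'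
      · subst h; rw [hEXX, if_pos rfl, if_pos rfl]; ring
      · rw [hEXX, if_neg h, if_neg (Ne.symm h)]; ring
    calc ∑ k, ∑ k', (v k * v k') * ∫ ω, X ω k * X ω k' ∂ℙ
        = ∑ k, ∑ k', ((v k * p k) * (v k' * p k')
            + (if k' = k then v k ^ 2 * (p k * (1 - p k)) else 0)) := by
          exact Finset.sum_congr rfl fun k _ => Finset.sum_congr rfl fun k' _ => h2 k k'
      _ = (∑ k, v k * p k) ^ 2 + ∑ k, v k ^ 2 * (p k * (1 - p k)) := by
          simp only [Finset.sum_add_distrib, Finset.sum_ite_eq', Finset.mem_univ, if_true]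
          congr 1
          rw [sq, Finset.sum_mul_sum]
  -- quadratic form of diagonal
  have hdiag : ∀ (c : ℝ) (v : Fin d → ℝ),
      v ⬝ᵥ (c • Matrix.diagonal p) *ᵥ v = c * ∑ k, v k ^ 2 * p k := by
    intro c v
    simp only [dotProduct, Matrix.smul_mulVec, Pi.smul_apply,
      Matrix.mulVec_diagonal, smul_eq_mul, Finset.mul_sum]
    exact Finset.sum_congr rfl fun k _ => by ring
  -- bounds on quadratic form
  have hlowq : ∀ v : Fin d → ℝ,
      m * ∫ ω, (∑ k, v k * X ω k) ^ 2 ∂ℙ ≤ ∫ ω, g ω * (∑ k, v k * X ω k) ^ 2 ∂ℙ := by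
    intro v
    have h0 : 0 ≤ ∫ ω, (g ω - m) * (∑ k, v k * X ω k) ^ 2 ∂ℙ :=
      integral_nonneg fun ω => mul_nonneg (sub_nonneg.2 (hg ω).1) (sq_nonneg _)
    have heq : ∫ ω, (g ω - m) * (∑ k, v k * X ω k) ^ 2 ∂ℙ
        = (∫ ω, g ω * (∑ k, v k * X ω k) ^ 2 ∂ℙ) - m * ∫ ω, (∑ k, v k * X ω k) ^ 2 ∂ℙ := by
      rw [← integral_const_mul, ← integral_sub (hgY2int v) ((hY2int v).const_mul m)]
      congr 1; funext ω; ring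
    linarith [heq ▸ h0]
  have hupq : ∀ v : Fin d → ℝ,
      ∫ ω, g ω * (∑ k, v k * X ω k) ^ 2 ∂ℙ ≤ M * ∫ ω, (∑ k, v k * X ω k) ^ 2 ∂ℙ := by
    intro v
    have h0 : 0 ≤ ∫ ω, (M - g ω) * (∑ k, v k * X ω k) ^ 2 ∂ℙ :=
      integral_nonneg fun ω => mul_nonneg (sub_nonneg.2 (hg ω).2) (sq_nonneg _)
    have heq : ∫ ω, (M - g ω) * (∑ k, v k * X ω k) ^ 2 ∂ℙ
        = M * (∫ ω, (∑ k, v k * X ω k) ^ 2 ∂ℙ) - ∫ ω, g ω * (∑ k, v k * X ω k) ^ 2 ∂ℙ := by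
      rw [← integral_const_mul, ← integral_sub ((hY2int v).const_mul M) (hgY2int v)]
      congr 1; funext ω; ring
    linarith [heq ▸ h0]
  -- Hermitian parts
  have hAH : A.IsHermitian := by
    refine Matrix.IsHermitian.ext fun i j => ?_
    simp only [star_trivial, hA]
    congr 1; funext ω; ring
  have hdH : ∀ c : ℝ, (c • Matrix.diagonal p).IsHermitian := by
    intro c
    refine Matrix.IsHermitian.ext fun i j => ?_
    simp only [star_trivial, Matrix.smul_apply, Matrix.diagonal, Matrix.of_apply, smul_eq_mul]
    by_cases h : i = j
    · subst h; rfl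
    · simp [h, Ne.symm h]
  constructor
  · refine Matrix.posSemidef_iff_dotProduct_mulVec.2 ⟨hAH.sub (hdH _), fun v => ?_⟩
    simp only [star_trivial, Matrix.sub_mulVec, dotProduct_sub, hquad, hdiag]
    rw [sub_nonneg]
    have h1 : (1 - pmax) * ∑ k, v k ^ 2 * p k ≤ ∫ ω, (∑ k, v k * X ω k) ^ 2 ∂ℙ := by
      rw [hY2 v]
      have h2 : (1 - pmax) * ∑ k, v k ^ 2 * p k ≤ ∑ k, v k ^ 2 * (p k * (1 - p k)) := by
        rw [Finset.mul_sum]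
        refine Finset.sum_le_sum fun k _ => ?_
        have : (1 - pmax) * (v k ^ 2 * p k) - v k ^ 2 * (p k * (1 - p k))
            = -(v k ^ 2 * (p k * (pmax - p k))) := by ring
        have h3 : 0 ≤ v k ^ 2 * (p k * (pmax - p k)) :=
          mul_nonneg (sq_nonneg _) (mul_nonneg (hpnn k) (sub_nonneg.2 (hple k)))
        linarith
      nlinarith [sq_nonneg (∑ k, v k * p k)]
    calc m * (1 - pmax) * ∑ k, v k ^ 2 * p k
        = m * ((1 - pmax) * ∑ k, v k ^ 2 * p k) := by ring
      _ ≤ m * ∫ ω, (∑ k, v k * X ω k) ^ 2 ∂ℙ := by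
          exact mul_le_mul_of_nonneg_left h1 hm.le
      _ ≤ ∫ ω, g ω * (∑ k, v k * X ω k) ^ 2 ∂ℙ := hlowq v
  · refine Matrix.posSemidef_iff_dotProduct_mulVec.2 ⟨(hdH _).sub hAH, fun v => ?_⟩
    simp only [star_trivial, Matrix.sub_mulVec, dotProduct_sub, hquad, hdiag]
    rw [sub_nonneg]
    have hCS : (∑ k, v k * p k) ^ 2 ≤ (∑ k, v k ^ 2 * p k) * ∑ k, p k := by
      have := Finset.sum_mul_sq_le_sq_mul_sq Finset.univ
        (fun k => v k * Real.sqrt (p k)) (fun k => Real.sqrt (p k))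
      have e1 : ∀ k : Fin d, v k * Real.sqrt (p k) * Real.sqrt (p k) = v k * p k := by
        intro k; rw [mul_assoc, Real.mul_self_sqrt (hpnn k)]
      have e2 : ∀ k : Fin d, (v k * Real.sqrt (p k)) ^ 2 = v k ^ 2 * p k := by
        intro k; rw [mul_pow, Real.sq_sqrt (hpnn k)]
      have e3 : ∀ k : Fin d, Real.sqrt (p k) ^ 2 = p k := fun k => Real.sq_sqrt (hpnn k)
      simpa only [e1, e2, e3] using this
    have h1 : ∫ ω, (∑ k, v k * X ω k) ^ 2 ∂ℙ ≤ (1 + ∑ k, p k) * ∑ k, v k ^ 2 * p k := by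
      rw [hY2 v]
      have h2 : ∑ k, v k ^ 2 * (p k * (1 - p k)) ≤ ∑ k, v k ^ 2 * p k := by
        refine Finset.sum_le_sum fun k _ => ?_
        nlinarith [mul_nonneg (sq_nonneg (v k)) (mul_self_nonneg (p k))]
      nlinarith [hCS, h2]
    calc ∫ ω, g ω * (∑ k, v k * X ω k) ^ 2 ∂ℙ
        ≤ M * ∫ ω, (∑ k, v k * X ω k) ^ 2 ∂ℙ := hupq v
      _ ≤ M * ((1 + ∑ k, p k) * ∑ k, v k ^ 2 * p k) := mul_le_mul_of_nonneg_left h1 hM.le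
      _ = M * (1 + ∑ k, p k) * ∑ k, v k ^ 2 * p k := by ring

/-- For the sparse linear prediction model `f(w) = φ(Xᵀw)` with `X ∈ {0,1}^d` having
pairwise uncorrelated coordinates with means `p` and `m ≤ φ'' ≤ M` on `D`, the Hessian
`F''(w) = E[φ''(Xᵀw) X Xᵀ]` satisfies
`m(1 - p_max) Diag(p) ⪯ F''(w) ⪯ M(1 + Σ_k p_k) Diag(p)` for all `w ∈ D`. -/
theorem sparse_linear_prediction_hessian_bounds
    {Ω : Type*} [MeasureSpace Ω] [IsProbabilityMeasure (ℙ : Measure Ω)]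
    (d : ℕ) (X : Ω → Fin d → ℝ) (hXmeas : Measurable X)
    (hX01 : ∀ ω k, X ω k = 0 ∨ X ω k = 1)
    (φ'' : Ω → ℝ → ℝ) (m M : ℝ) (hm : 0 < m) (hM : 0 < M)
    (D : Set (Fin d → ℝ)) (hD : Convex ℝ D) (hDc : IsCompact D)
    (hφ : ∀ ω, ∀ w ∈ D, m ≤ φ'' ω (∑ j, X ω j * w j) ∧ φ'' ω (∑ j, X ω j * w j) ≤ M)
    (p : Fin d → ℝ) (hp : ∀ k, p k = ∫ ω, X ω k ∂ℙ)
    (pmax : ℝ) (hpmax : IsGreatest (Set.range p) pmax)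
    (huncor : ∀ k k', k ≠ k' →
      ∫ ω, X ω k * X ω k' ∂ℙ = (∫ ω, X ω k ∂ℙ) * ∫ ω, X ω k' ∂ℙ)
    (hint : ∀ w ∈ D, ∀ k k',
      Integrable (fun ω => φ'' ω (∑ j, X ω j * w j) * X ω k * X ω k') ℙ)
    (F'' : (Fin d → ℝ) → Matrix (Fin d) (Fin d) ℝ)
    (hF'' : ∀ w k k',
      F'' w k k' = ∫ ω, φ'' ω (∑ j, X ω j * w j) * X ω k * X ω k' ∂ℙ) :
    ∀ w ∈ D,
      (F'' w - (m * (1 - pmax)) • Matrix.diagonal p).PosSemidef ∧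
      ((M * (1 + ∑ k, p k)) • Matrix.diagonal p - F'' w).PosSemidef := by
  intro w hw
  exact sparse_aux X hXmeas hX01 (fun ω => φ'' ω (∑ j, X ω j * w j)) m M hm hM
    (fun ω => hφ ω w hw) p hp pmax hpmax huncor (hint w hw) (F'' w) (hF'' w)
end
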